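/- If μ ∈ (0,1) and ψ(s) = s^{−μ} on (0,T], then ψ ∈ L¹(0,T) and for any bounded measurable g : [0,T] → ℝ≥0 satisfying g(t) ≤ c∫₀ᵗ ψ(t−s) g(s) ds for all t ∈ [0,T] with c ≥ 0, we have g ≡ 0 on [0,T] (singular Gronwall lemma). -/
import Mathlib

open MeasureTheory Set intervalIntegral

/-- Measurability of `x ↦ x ^ p` for `p ≠ 0`. -/
lemma stmt15_meas_rpow (p : ℝ) (hp : p ≠ 0) : Measurable fun x : ℝ => x ^ p := by
  have h : (fun x : ℝ => x ^ p) = fun x =>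
      if x = 0 then 0 else
        Real.exp (Real.log x * p) * (if x < 0 then Real.cos (p * Real.pi) else 1) := by
    funext x
    rcases lt_trichotomy x 0 with hx | hx | hx
    · rw [Real.rpow_def_of_neg hx]
      simp [hx.ne, hx]
    · simp [hx, Real.zero_rpow hp]
    · rw [Real.rpow_def_of_pos hx]
      simp [hx.ne', not_lt.mpr hx.le]
  rw [h]
  refine Measurable.ite (measurableSet_eq) measurable_const ?_
  refine ((Real.measurable_log.mul measurable_const).exp).mul ?_
  exact Measurable.ite (measurableSet_lt measurable_id measurable_const)
    measurable_const measurable_const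

/-- Kernel interval integrability. -/
lemma stmt15_ker (μ : ℝ) (hμ1 : μ < 1) (a t : ℝ) :
    IntervalIntegrable (fun s : ℝ => (t - s) ^ (-μ)) volume a t := by
  have h := (intervalIntegrable_rpow' (a := t - a) (b := 0)
    (show (-1:ℝ) < -μ by linarith)).comp_sub_left t
  simpa using h

/-- Kernel integral value. -/
lemma stmt15_key (μ : ℝ) (hμ0 : 0 < μ) (hμ1 : μ < 1) (a t : ℝ) (hat : a ≤ t) :
    ∫ s in a..t, (t - s) ^ (-μ) = (t - a) ^ (1 - μ) / (1 - μ) := by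
  rw [intervalIntegral.integral_comp_sub_left (fun u : ℝ => u ^ (-μ)) t]
  simp only [sub_self]
  rw [integral_rpow (Or.inl (by linarith))]
  rw [Real.zero_rpow (by linarith)]
  have h : -μ + 1 = 1 - μ := by ring
  rw [h, sub_zero]

theorem stmt15 (T μ c : ℝ) (hT : 0 < T) (hμ0 : 0 < μ) (hμ1 : μ < 1) (hc : 0 ≤ c)
    (g : ℝ → ℝ) (hg0 : ∀ t ∈ Set.Icc (0:ℝ) T, 0 ≤ g t) (hmeas : Measurable g)
    (hbdd : ∃ M : ℝ, ∀ t ∈ Set.Icc (0:ℝ) T, g t ≤ M)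
    (hG : ∀ t ∈ Set.Icc (0:ℝ) T, g t ≤ c * ∫ s in (0:ℝ)..t, (t - s) ^ (-μ) * g s) :
    MeasureTheory.IntegrableOn (fun s : ℝ => s ^ (-μ)) (Set.Ioc 0 T) ∧
    ∀ t ∈ Set.Icc (0:ℝ) T, g t = 0 := by
  constructor
  · exact (intervalIntegrable_rpow' (a := 0) (b := T) (show (-1:ℝ) < -μ by linarith)).1
  obtain ⟨M, hM⟩ := hbdd
  have hM0 : 0 ≤ M := le_trans (hg0 0 ⟨le_refl 0, hT.le⟩) (hM 0 ⟨le_refl 0, hT.le⟩)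
  have hμd : (0:ℝ) < 1 - μ := by linarith
  -- choice of δ
  set E : ℝ := (1 - μ) / (2 * (c + 1)) with hE
  have hE0 : 0 < E := by positivity
  set δ : ℝ := min T (E ^ ((1:ℝ) / (1 - μ))) with hδ
  have hδ0 : 0 < δ := lt_min hT (Real.rpow_pos_of_pos hE0 _)
  have hδT : δ ≤ T := min_le_left _ _
  have hδE : δ ^ (1 - μ) ≤ E := by
    have h1 : δ ^ (1 - μ) ≤ (E ^ ((1:ℝ) / (1 - μ))) ^ (1 - μ) :=
      Real.rpow_le_rpow hδ0.le (min_le_right _ _) hμd.le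
    calc δ ^ (1 - μ) ≤ (E ^ ((1:ℝ) / (1 - μ))) ^ (1 - μ) := h1
      _ = E ^ (((1:ℝ) / (1 - μ)) * (1 - μ)) := by rw [← Real.rpow_mul hE0.le]
      _ = E := by rw [one_div_mul_cancel hμd.ne', Real.rpow_one]
  have hcontr : c * δ ^ (1 - μ) / (1 - μ) ≤ 1 / 2 := by
    have h1 : c * δ ^ (1 - μ) ≤ c * E := by
      apply mul_le_mul_of_nonneg_left hδE hc
    have h2 : c * E ≤ (1 - μ) / 2 := by
      rw [hE, mul_div_assoc', div_le_div_iff₀ (by positivity) (by norm_num)]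
      nlinarith
    rw [div_le_div_iff₀ hμd (by norm_num)]
    nlinarith
  -- integrability of the product
  have hgi : ∀ t ∈ Icc (0:ℝ) T, IntervalIntegrable (fun s => (t - s) ^ (-μ) * g s) volume 0 t := by
    intro t ht
    have hker := stmt15_ker μ hμ1 0 t
    have hbig : IntervalIntegrable (fun s => M * (t - s) ^ (-μ)) volume 0 t := hker.const_mul M
    apply hbig.mono_fun
    · exact (((stmt15_meas_rpow (-μ) (by linarith)).comp
        (measurable_const.sub measurable_id')).mul hmeas).aestronglyMeasurable
    · rw [uIoc_of_le ht.1]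
      filter_upwards [ae_restrict_mem measurableSet_Ioc] with s hs
      have hs0T : s ∈ Icc (0:ℝ) T := ⟨hs.1.le, hs.2.trans ht.2⟩
      have hk0 : 0 ≤ (t - s) ^ (-μ) := Real.rpow_nonneg (by linarith [hs.2]) _
      simp only [Real.norm_eq_abs]
      rw [abs_of_nonneg (mul_nonneg hk0 (hg0 s hs0T)),
        abs_of_nonneg (mul_nonneg hM0 hk0)]
      calc (t - s) ^ (-μ) * g s ≤ (t - s) ^ (-μ) * M :=
            mul_le_mul_of_nonneg_left (hM s hs0T) hk0
        _ = M * (t - s) ^ (-μ) := mul_comm _ _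
  -- main induction
  have main : ∀ n : ℕ, ∀ t ∈ Icc (0:ℝ) T, t ≤ n * δ → g t = 0 := by
    intro n
    induction n with
    | zero =>
      intro t ht h0
      have ht0 : t = 0 := le_antisymm (by simpa using h0) ht.1
      subst ht0
      have := hG 0 ⟨le_refl 0, hT.le⟩
      rw [intervalIntegral.integral_same, mul_zero] at this
      exact le_antisymm this (hg0 0 ⟨le_refl 0, hT.le⟩)
    | succ n ih =>
      have inner : ∀ k : ℕ, ∀ t ∈ Icc (0:ℝ) T, t ≤ (n + 1 : ℕ) * δ → g t ≤ M / 2 ^ k := by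
        intro k
        induction k with
        | zero => intro t ht _; simpa using hM t ht
        | succ k ihk =>
          intro t ht htn
          by_cases hcase : t ≤ n * δ
          · rw [ih t ht hcase]; positivity
          push_neg at hcase
          set a : ℝ := n * δ with ha
          have ha0 : 0 ≤ a := by positivity
          have hat : a ≤ t := hcase.le
          have htaδ : t - a ≤ δ := by
            have : ((n + 1 : ℕ) : ℝ) * δ = a + δ := by push_cast; ring
            linarith [htn.trans_eq this]
          -- g vanishes on [0, a]
          have hzero : ∀ s ∈ Icc (0:ℝ) a, g s = 0 := fun s hs =>
            ih s ⟨hs.1, hs.2.trans (hat.trans ht.2)⟩ hs.2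
          have hI := hgi t ht
          have hI1 : IntervalIntegrable (fun s => (t - s) ^ (-μ) * g s) volume 0 a :=
            hI.mono_set' (by rw [uIoc_of_le ha0, uIoc_of_le ht.1]; exact Ioc_subset_Ioc_right hat)
          have hI2 : IntervalIntegrable (fun s => (t - s) ^ (-μ) * g s) volume a t :=
            hI.mono_set' (by rw [uIoc_of_le hat, uIoc_of_le ht.1]; exact Ioc_subset_Ioc_left ha0)
          have hsplit : (∫ s in (0:ℝ)..t, (t - s) ^ (-μ) * g s)
              = (∫ s in (0:ℝ)..a, (t - s) ^ (-μ) * g s)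
                + ∫ s in a..t, (t - s) ^ (-μ) * g s :=
            (intervalIntegral.integral_add_adjacent_intervals hI1 hI2).symm
          have hfirst : (∫ s in (0:ℝ)..a, (t - s) ^ (-μ) * g s) = 0 := by
            rw [intervalIntegral.integral_congr (g := fun _ => (0:ℝ))
              (fun s hs => by rw [uIcc_of_le ha0] at hs; rw [hzero s hs, mul_zero])]
            simp
          have hsecond : (∫ s in a..t, (t - s) ^ (-μ) * g s)
              ≤ ∫ s in a..t, (t - s) ^ (-μ) * (M / 2 ^ k) := by
            apply intervalIntegral.integral_mono_on hat hI2
              ((stmt15_ker μ hμ1 a t).mul_const _)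
            intro s hs
            have hk0 : 0 ≤ (t - s) ^ (-μ) := Real.rpow_nonneg (by linarith [hs.2]) _
            exact mul_le_mul_of_nonneg_left
              (ihk s ⟨ha0.trans hs.1, hs.2.trans ht.2⟩ (hs.2.trans htn)) hk0
          have hval : (∫ s in a..t, (t - s) ^ (-μ) * (M / 2 ^ k))
              = (t - a) ^ (1 - μ) / (1 - μ) * (M / 2 ^ k) := by
            rw [intervalIntegral.integral_mul_const, stmt15_key μ hμ0 hμ1 a t hat]
          have hbound : (t - a) ^ (1 - μ) ≤ δ ^ (1 - μ) :=
            Real.rpow_le_rpow (by linarith) htaδ hμd.le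
          have hgt := hG t ht
          rw [hsplit, hfirst, zero_add] at hgt
          have hstep : g t ≤ c * ((t - a) ^ (1 - μ) / (1 - μ) * (M / 2 ^ k)) := by
            calc g t ≤ c * ∫ s in a..t, (t - s) ^ (-μ) * g s := hgt
              _ ≤ c * ((t - a) ^ (1 - μ) / (1 - μ) * (M / 2 ^ k)) := by
                  rw [← hval]; exact mul_le_mul_of_nonneg_left hsecond hc
          have hfin : c * ((t - a) ^ (1 - μ) / (1 - μ) * (M / 2 ^ k))
              ≤ 1 / 2 * (M / 2 ^ k) := by
            have h2k : (0:ℝ) ≤ M / 2 ^ k := by positivity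
            have h1 : c * ((t - a) ^ (1 - μ) / (1 - μ)) ≤ c * (δ ^ (1 - μ) / (1 - μ)) := by
              gcongr
            have h2 : c * (δ ^ (1 - μ) / (1 - μ)) ≤ 1 / 2 := by
              rw [mul_div_assoc] at hcontr; exact hcontr
            calc c * ((t - a) ^ (1 - μ) / (1 - μ) * (M / 2 ^ k))
                = c * ((t - a) ^ (1 - μ) / (1 - μ)) * (M / 2 ^ k) := by ring
              _ ≤ 1 / 2 * (M / 2 ^ k) :=
                  mul_le_mul_of_nonneg_right (h1.trans h2) h2k
          have : g t ≤ 1 / 2 * (M / 2 ^ k) := hstep.trans hfin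
          calc g t ≤ 1 / 2 * (M / 2 ^ k) := this
            _ = M / 2 ^ (k + 1) := by rw [pow_succ]; ring
      intro t ht htn
      refine le_antisymm ?_ (hg0 t ht)
      by_contra hpos
      push_neg at hpos
      obtain ⟨k, hk⟩ := pow_unbounded_of_one_lt (M / g t) (y := (2:ℝ)) one_lt_two
      have h1 : M < 2 ^ k * g t := (div_lt_iff₀ hpos).mp hk
      have h2 : g t ≤ M / 2 ^ k := inner k t ht htn
      have h3 : g t * 2 ^ k ≤ M := (le_div_iff₀ (by positivity)).mp h2
      linarith
  intro t ht
  obtain ⟨n, hn⟩ := exists_nat_ge (T / δ)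
  apply main n t ht
  have : T ≤ n * δ := by rw [div_le_iff₀ hδ0] at hn; linarith
  linarith [ht.2]
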